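/- Let Q₀, P₀ be orthogonal projections on a Hilbert space with P₀ ≤ Q₀ + F for an orthogonal projection F satisfying Ṽ F = F, where Ṽ is unitary with ‖Ṽ Q₀ − Q₀‖ ≤ η and Ṽ Q₀ = Q₀ Ṽ. Then ‖Ṽ P₀ − P₀‖ ≤ η. -/

import Mathlib

/-- Transfer estimate from the proof of Lemma 1.2: if `P₀ ≤ Q₀ + F` with `F ⊥ Q₀`,
`Ṽ F = F`, `Ṽ Q₀ = Q₀ Ṽ` and `‖Ṽ Q₀ − Q₀‖ ≤ η`, then `‖Ṽ P₀ − P₀‖ ≤ η`. -/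
theorem stmt_14 {H : Type*} [NormedAddCommGroup H] [InnerProductSpace ℂ H]
    [CompleteSpace H]
    (P₀ Q₀ F Vt : H →L[ℂ] H)
    (hP₀ : IsIdempotentElem P₀) (hP₀sa : IsSelfAdjoint P₀)
    (hQ₀ : IsIdempotentElem Q₀) (hQ₀sa : IsSelfAdjoint Q₀)
    (hF : IsIdempotentElem F) (hFsa : IsSelfAdjoint F)
    (hQF : Q₀ * F = 0)
    (hle : LinearMap.range (P₀ : H →ₗ[ℂ] H) ≤ LinearMap.range (Q₀ : H →ₗ[ℂ] H) ⊔ LinearMap.range (F : H →ₗ[ℂ] H))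
    (hVt : Vt ∈ unitary (H →L[ℂ] H))
    (hVF : Vt * F = F)
    (hVQc : Vt * Q₀ = Q₀ * Vt)
    (η : ℝ) (hη : 0 < η)
    (hVQ : ‖Vt * Q₀ - Q₀‖ ≤ η) :
    ‖Vt * P₀ - P₀‖ ≤ η := by
  have hFQ : F * Q₀ = 0 := by
    have h := congrArg star hQF
    rw [star_mul, hQ₀sa.star_eq, hFsa.star_eq, star_zero] at h
    exact h
  -- (Q₀ + F) acts as identity on range P₀
  have hproj : ∀ x : H, Q₀ (P₀ x) + F (P₀ x) = P₀ x := by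
    intro x
    have hx : P₀ x ∈ LinearMap.range (Q₀ : H →ₗ[ℂ] H) ⊔ LinearMap.range (F : H →ₗ[ℂ] H) := hle ⟨x, rfl⟩
    rcases Submodule.mem_sup.mp hx with ⟨y, ⟨a, ha⟩, z, ⟨b, hb⟩, hyz⟩
    subst ha; subst hb
    rw [← hyz]
    have h1 : Q₀ (Q₀ a) = Q₀ a := DFunLike.congr_fun hQ₀ a
    have h2 : Q₀ (F b) = 0 := DFunLike.congr_fun hQF b
    have h3 : F (Q₀ a) = 0 := DFunLike.congr_fun hFQ a
    have h4 : F (F b) = F b := DFunLike.congr_fun hF b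
    simp only [ContinuousLinearMap.coe_coe, map_add, h1, h2, h3, h4]
    abel
  -- ‖P₀ x‖ ≤ ‖x‖
  have hPnorm : ∀ x : H, ‖P₀ x‖ ≤ ‖x‖ := by
    intro x
    have hsq : (‖P₀ x‖ : ℝ) * ‖P₀ x‖ ≤ ‖x‖ * ‖P₀ x‖ := by
      have h2 : P₀ (P₀ x) = P₀ x := DFunLike.congr_fun hP₀ x
      have h1 : (inner ℂ (P₀ x) (P₀ x) : ℂ) = inner ℂ x (P₀ x) := by
        have h := hP₀sa.isSymmetric x (P₀ x)
        simpa [h2] using h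
      have h3 : (‖P₀ x‖ : ℝ) * ‖P₀ x‖ = Complex.re (inner ℂ x (P₀ x) : ℂ) := by
        rw [← inner_self_eq_norm_mul_norm (𝕜 := ℂ), h1]; rfl
      rw [h3]
      calc Complex.re (inner ℂ x (P₀ x) : ℂ) ≤ ‖(inner ℂ x (P₀ x) : ℂ)‖ :=
            Complex.re_le_norm _
        _ ≤ ‖x‖ * ‖P₀ x‖ := norm_inner_le_norm x (P₀ x)
    rcases eq_or_lt_of_le (norm_nonneg (P₀ x)) with h0 | h0
    · rw [← h0]; exact norm_nonneg x
    · exact le_of_mul_le_mul_right hsq h0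
  refine ContinuousLinearMap.opNorm_le_bound _ hη.le (fun x => ?_)
  have key : (Vt * P₀ - P₀) x = (Vt * Q₀ - Q₀) (P₀ x) := by
    have hVFx : Vt (F (P₀ x)) = F (P₀ x) := DFunLike.congr_fun hVF (P₀ x)
    simp only [ContinuousLinearMap.sub_apply, ContinuousLinearMap.mul_apply]
    conv_lhs => rw [← hproj x]
    rw [map_add, hVFx]
    abel_nf
  rw [key]
  calc ‖(Vt * Q₀ - Q₀) (P₀ x)‖ ≤ ‖Vt * Q₀ - Q₀‖ * ‖P₀ x‖ :=
        (Vt * Q₀ - Q₀).le_opNorm (P₀ x)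
    _ ≤ η * ‖x‖ := by
        apply mul_le_mul hVQ (hPnorm x) (norm_nonneg _) hη.le
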